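/- For every nonnegative integer k there exists a polynomial P_k with rational coefficients, of degree at most 2k, such that P_k(n) = A_{n,n-k} for every integer n ≥ k. Moreover, if k > 0, then P_k(u) = 0 for every u in {-1, 0, 1, ..., k}. -/

import Mathlib

/-- Unsigned Stirling numbers of the first kind (cycle Stirling numbers). -/
def stirling1 : ℕ → ℕ → ℕ
  | 0, 0 => 1
  | 0, _ + 1 => 0
  | _ + 1, 0 => 0
  | n + 1, k + 1 => n * stirling1 n (k + 1) + stirling1 n k

/-- Generalized binomial coefficient with integer top: `C(a,b) = a(a-1)⋯(a-b+1)/b!`. -/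
def intChoose (a : ℤ) (b : ℕ) : ℚ :=
  (∏ i ∈ Finset.range b, ((a : ℚ) - i)) / b.factorial

/-- Bernoulli–Stirling numbers of the first kind. -/
def bsA (n k : ℕ) : ℚ :=
  ∑ h ∈ Finset.range (n + 1),
    bernoulli h * intChoose ((k : ℤ) + h - 1) h * stirling1 n (h + k) * (n : ℚ) ^ h

open Polynomial Finset


lemma stirling1_eq_zero : ∀ {n m : ℕ}, n < m → stirling1 n m = 0 := by
  intro n
  induction n with
  | zero => intro m hm; match m, hm with
            | m + 1, _ => rfl
  | succ n ih =>
    intro m hm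
    match m, hm with
    | k + 1, hm =>
      show n * stirling1 n (k+1) + stirling1 n k = 0
      rw [ih (by omega), ih (by omega)]; ring

lemma stirling1_self (n : ℕ) : stirling1 n n = 1 := by
  induction n with
  | zero => rfl
  | succ n ih =>
    show n * stirling1 n (n+1) + stirling1 n n = 1
    rw [stirling1_eq_zero (by omega), ih]; ring

/-- Falling factorial polynomial. -/
noncomputable def ffp (m : ℕ) : Polynomial ℚ := ∏ i ∈ range m, (X - C (i : ℚ))

lemma ffp_natDegree (m : ℕ) : (ffp m).natDegree = m := by
  rw [ffp, natDegree_prod]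
  · rw [Finset.sum_congr rfl (fun i (_ : i ∈ range m) => natDegree_X_sub_C (i:ℚ))]
    simp
  · intro i _; exact X_sub_C_ne_zero _

lemma ffp_monic (m : ℕ) : (ffp m).Monic :=
  monic_prod_of_monic _ _ fun i _ => monic_X_sub_C _

lemma ffp_eval (m : ℕ) (x : ℚ) : (ffp m).eval x = ∏ i ∈ range m, (x - i) := by
  simp [ffp, eval_prod]

lemma ffp_eval_zero (m : ℕ) : (ffp (m+1)).eval 0 = 0 := by
  rw [ffp_eval]
  exact Finset.prod_eq_zero (mem_range.2 (Nat.succ_pos m)) (by simp)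

lemma ffp_diff (m : ℕ) (x : ℚ) :
    (ffp (m+1)).eval (x+1) - (ffp (m+1)).eval x = (m+1) * (ffp m).eval x := by
  have h1 : (ffp (m+1)).eval (x+1) = (x+1) * (ffp m).eval x := by
    rw [ffp_eval, ffp_eval, prod_range_succ']
    have e : ∏ i ∈ range m, (x + 1 - ((i+1 : ℕ) : ℚ)) = ∏ i ∈ range m, (x - i) :=
      Finset.prod_congr rfl fun i _ => by push_cast; ring
    rw [e]
    push_cast; ring
  have h2 : (ffp (m+1)).eval x = (ffp m).eval x * (x - m) := by
    rw [ffp_eval, ffp_eval, prod_range_succ]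
  rw [h1, h2]; ring

lemma antidiff : ∀ (d : ℕ) (q : Polynomial ℚ), q.natDegree ≤ d →
    ∃ p : Polynomial ℚ, p.eval 0 = 0 ∧ p.natDegree ≤ d + 1 ∧
      ∀ x : ℚ, p.eval (x+1) - p.eval x = q.eval x := by
  intro d
  induction d with
  | zero =>
    intro q hq
    refine ⟨C (q.coeff 0) * X, by simp, ?_, ?_⟩
    · exact (natDegree_mul_le).trans (by simp)
    · intro x
      rw [Polynomial.eq_C_of_natDegree_le_zero hq]
      simp; ring
  | succ d ih =>
    intro q hq
    set c := q.coeff (d+1) with hc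
    have hdeg' : (q - C c * ffp (d+1)).natDegree ≤ d := by
      apply natDegree_le_iff_coeff_eq_zero.2
      intro m hm
      rcases eq_or_lt_of_le (Nat.succ_le_of_lt hm) with h | h
      · rw [coeff_sub, coeff_C_mul, ← h]
        have : (ffp (d+1)).coeff (d+1) = 1 := by
          have := (ffp_monic (d+1)).leadingCoeff
          rwa [leadingCoeff, ffp_natDegree] at this
        rw [this, mul_one, hc, sub_self]
      · rw [coeff_sub, coeff_C_mul]
        rw [coeff_eq_zero_of_natDegree_lt (lt_of_le_of_lt hq h),
            coeff_eq_zero_of_natDegree_lt (by rw [ffp_natDegree]; exact h)]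
        ring
    obtain ⟨p', hp'0, hp'd, hp'diff⟩ := ih _ hdeg'
    refine ⟨C (c / (d+2)) * ffp (d+2) + p', ?_, ?_, ?_⟩
    · simp only [eval_add, eval_mul, eval_C, ffp_eval_zero, hp'0]; ring
    · apply natDegree_add_le_of_degree_le
      · exact (natDegree_mul_le).trans (by simp [ffp_natDegree])
      · omega
    · intro x
      have h1 := ffp_diff (d+1) x
      have h2 := hp'diff x
      simp only [eval_add, eval_mul, eval_C] at *
      have hne : ((d:ℚ)+2) ≠ 0 := by positivity
      rw [eval_sub, eval_mul, eval_C] at h2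
      have h1' : c / ((d:ℚ)+2) * ((ffp (d+1+1)).eval (x+1) - (ffp (d+1+1)).eval x)
          = c * (ffp (d+1)).eval x := by
        rw [h1]; field_simp; push_cast; ring
      have hdd : d + 1 + 1 = d + 2 := rfl
      rw [hdd] at h1'
      linear_combination h1' + h2

lemma exT (j : ℕ) : ∃ T : Polynomial ℚ,
    T.natDegree ≤ 2*j ∧
    (∀ n : ℕ, T.eval (n:ℚ) = stirling1 (n+j) n) ∧
    (∀ t : ℕ, 0 < j → t ≤ j → T.eval (-(t:ℚ)) = 0) ∧
    T.eval (-(j:ℚ)-1) = 1 := by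
  induction j with
  | zero =>
    refine ⟨1, by simp, fun n => by simp [stirling1_self], fun t h => absurd h (by omega), by simp⟩
  | succ j ih =>
    obtain ⟨T, hTdeg, hTval, hTroot, hTneg⟩ := ih
    set q : Polynomial ℚ := (X + C ((j:ℚ)+1)) * T.comp (X + 1) with hq
    have hqdeg : q.natDegree ≤ 2*j + 1 := by
      apply natDegree_mul_le.trans
      have h1 : (X + C ((j:ℚ)+1)).natDegree ≤ 1 := (natDegree_X_add_C ((j:ℚ)+1)).le
      have h2 : (T.comp (X + 1)).natDegree ≤ 2*j := by
        rw [natDegree_comp]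
        have : (X + 1 : Polynomial ℚ).natDegree = 1 := by
          rw [show (X + 1 : Polynomial ℚ) = X + C 1 by simp, natDegree_X_add_C]
        rw [this, mul_one]; exact hTdeg
      omega
    obtain ⟨p, hp0, hpdeg, hpdiff⟩ := antidiff (2*j+1) q hqdeg
    have hqeval : ∀ x : ℚ, q.eval x = (x + j + 1) * T.eval (x + 1) := by
      intro x
      rw [hq, eval_mul, eval_comp, eval_add, eval_X, eval_C, eval_add, eval_X, eval_one]
      ring
    have hroots : ∀ t : ℕ, t ≤ j + 1 → p.eval (-(t:ℚ)) = 0 := by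
      intro t ht
      induction t with
      | zero => simpa using hp0
      | succ t iht =>
        have hd := hpdiff (-((t:ℚ)+1))
        have harg : (-((t:ℚ)+1) + 1) = -(t:ℚ) := by ring
        rw [harg] at hd
        have hqz : q.eval (-((t:ℚ)+1)) = 0 := by
          rw [hqeval, harg]
          rcases eq_or_lt_of_le (Nat.lt_succ_iff.1 ht) with h | h
          · have : (-((t:ℚ)+1) + (j:ℚ) + 1) = 0 := by rw [h]; push_cast; ring
            rw [this, zero_mul]
          · rw [hTroot t (by omega) (by omega), mul_zero]
        have hpt : p.eval (-(t:ℚ)) = 0 := iht (by omega)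
        have : p.eval (-((t:ℚ)+1)) = p.eval (-(t:ℚ)) - q.eval (-((t:ℚ)+1)) := by linarith
        rw [show (-(((t+1 : ℕ)):ℚ)) = -((t:ℚ)+1) by push_cast; ring, this, hpt, hqz, sub_zero]
    have hnegval : p.eval (-(((j+1 : ℕ)):ℚ) - 1) = 1 := by
      have hd := hpdiff (-((j:ℚ)+2))
      have harg : (-((j:ℚ)+2) + 1) = -((j:ℚ)+1) := by ring
      rw [harg] at hd
      have hpz : p.eval (-((j:ℚ)+1)) = 0 := by
        have := hroots (j+1) (le_refl _)
        rwa [show (-(((j+1 : ℕ)):ℚ)) = -((j:ℚ)+1) by push_cast; ring] at this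
      have hqz : q.eval (-((j:ℚ)+2)) = -1 := by
        rw [hqeval]
        rw [show (-((j:ℚ)+2) + 1) = -(j:ℚ)-1 by ring, hTneg]
        ring
      rw [show (-(((j+1 : ℕ)):ℚ) - 1) = -((j:ℚ)+2) by push_cast; ring]
      rw [hpz, hqz] at hd
      linarith
    refine ⟨p, by omega, ?_, fun t _ ht => hroots t ht, hnegval⟩
    intro n
    induction n with
    | zero => simpa [show ∀ a, stirling1 (a+1) 0 = 0 from fun a => rfl] using hp0
    | succ n ihn =>
      have hd := hpdiff (n : ℚ)
      have hstep : p.eval ((n:ℚ)+1) = p.eval (n:ℚ) + q.eval (n:ℚ) := by linarith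
      rw [show ((n+1 : ℕ) : ℚ) = (n:ℚ)+1 by push_cast; ring, hstep, ihn, hqeval]
      rw [show ((n:ℚ)+1) = ((n+1 : ℕ) : ℚ) by push_cast; ring, hTval (n+1)]
      have hrec : stirling1 ((n+j+1) + 1) (n + 1)
          = (n + j + 1) * stirling1 (n+j+1) (n + 1) + stirling1 (n+j+1) n := rfl
      rw [show n + 1 + (j+1) = (n+j+1) + 1 from by omega, hrec]
      have e1 : n + 1 + j = n + j + 1 := by omega
      have e2 : n + (j+1) = n + j + 1 := by omega
      rw [e1, e2]
      push_cast
      ring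

lemma prod_at_neg_one (k h : ℕ) (hh : h ≤ k) :
    ∏ i ∈ range h, (-1 - ((k:ℚ) - h + 1 + i)) = (-1)^h * ((k+1).descFactorial h : ℚ) := by
  have e1 : ∏ i ∈ range h, (-1 - ((k:ℚ) - h + 1 + i))
      = ∏ i ∈ range h, (-1 * ((k:ℚ) - h + 2 + i)) :=
    Finset.prod_congr rfl fun i _ => by ring
  rw [e1, Finset.prod_mul_distrib, Finset.prod_const, card_range]
  congr 1
  have e2 : ∏ i ∈ range h, ((k:ℚ) - h + 2 + i)
      = ∏ i ∈ range h, ((fun j : ℕ => (k:ℚ) + 1 - j) (h - 1 - i)) := by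
    apply Finset.prod_congr rfl
    intro i hi
    simp only []
    have hi' : i < h := mem_range.1 hi
    push_cast [Nat.cast_sub (show i ≤ h - 1 by omega), Nat.cast_sub (show 1 ≤ h by omega),
      Nat.cast_sub hh]
    ring
  rw [e2]
  have e2' : ∏ i ∈ range h, ((fun j : ℕ => (k:ℚ) + 1 - j) (h - 1 - i))
      = ∏ i ∈ range h, ((k:ℚ) + 1 - i) :=
    Finset.prod_range_reflect (fun j : ℕ => (k:ℚ) + 1 - (j:ℚ)) h
  rw [e2']
  rw [Nat.descFactorial_eq_prod_range, Nat.cast_prod]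
  apply Finset.prod_congr rfl
  intro i hi
  have : i ≤ k + 1 := by have := mem_range.1 hi; omega
  push_cast [Nat.cast_sub this]
  ring

theorem bsA_polynomial_exists (k : ℕ) :
    ∃ P : Polynomial ℚ, P.degree ≤ 2 * k ∧
      (∀ n : ℕ, k ≤ n → P.eval (n : ℚ) = bsA n (n - k)) ∧
      (0 < k → ∀ u : ℤ, -1 ≤ u → u ≤ (k : ℤ) → P.eval (u : ℚ) = 0) := by
  choose T hTdeg hTval hTroot hTneg using exT
  set P : Polynomial ℚ := ∑ h ∈ Finset.range (k+1),
    C (_root_.bernoulli h * (1/(h.factorial : ℚ))) *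
      (∏ i ∈ Finset.range h, (X - C ((k:ℚ) - h + 1 + i))) *
      ((T (k-h)).comp (X - C ((k:ℚ) - h))) * X^h with hP
  have hPeval : ∀ x : ℚ, P.eval x = ∑ h ∈ range (k+1),
      _root_.bernoulli h * (1/(h.factorial : ℚ)) * (∏ i ∈ range h, (x - ((k:ℚ) - h + 1 + i))) *
        (T (k-h)).eval (x - ((k:ℚ) - h)) * x^h := by
    intro x
    rw [hP, eval_finset_sum]
    apply Finset.sum_congr rfl
    intro h _
    rw [eval_mul, eval_mul, eval_mul, eval_pow, eval_X, eval_C, eval_comp, eval_prod]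
    congr 2
    · congr 1
      apply Finset.prod_congr rfl
      intro i _
      rw [eval_sub, eval_X, eval_C]
    · rw [eval_sub, eval_X, eval_C]
  refine ⟨P, ?_, ?_, ?_⟩
  · -- degree bound
    have hnd : P.natDegree ≤ 2*k := by
      rw [hP]
      apply natDegree_sum_le_of_forall_le
      intro h hh
      have hhk : h ≤ k := by have := mem_range.1 hh; omega
      refine natDegree_mul_le.trans ?_
      have b1 : (C (_root_.bernoulli h * (1/(h.factorial : ℚ))) *
          (∏ i ∈ Finset.range h, (X - C ((k:ℚ) - h + 1 + i))) *
          ((T (k-h)).comp (X - C ((k:ℚ) - h)))).natDegree ≤ h + 2*(k-h) := by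
        refine natDegree_mul_le.trans ?_
        have b2 : (C (_root_.bernoulli h * (1/(h.factorial : ℚ))) *
            (∏ i ∈ Finset.range h, (X - C ((k:ℚ) - h + 1 + i)))).natDegree ≤ h := by
          refine natDegree_mul_le.trans ?_
          have b3 : (∏ i ∈ Finset.range h, (X - C ((k:ℚ) - h + 1 + i))).natDegree ≤ h := by
            refine (natDegree_prod_le _ _).trans ?_
            rw [Finset.sum_congr rfl (fun i (_ : i ∈ range h) => natDegree_X_sub_C ((k:ℚ) - h + 1 + i))]
            simp
          simp only [natDegree_C]
          omega
        have b4 : ((T (k-h)).comp (X - C ((k:ℚ) - h))).natDegree ≤ 2*(k-h) := by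
          rw [natDegree_comp, natDegree_X_sub_C, mul_one]
          exact hTdeg _
        omega
      have b5 : ((X : Polynomial ℚ)^h).natDegree ≤ h := (natDegree_X_pow h).le
      omega
    calc P.degree ≤ (P.natDegree : WithBot ℕ) := degree_le_natDegree
      _ ≤ ((2*k : ℕ) : WithBot ℕ) := by exact_mod_cast hnd
      _ = 2 * (k : WithBot ℕ) := by push_cast; ring
  · -- values
    intro n hn
    rw [hPeval, bsA]
    have hsub : Finset.range (k+1) ⊆ Finset.range (n+1) := Finset.range_subset_range.2 (by omega)
    rw [← Finset.sum_subset hsub (by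
      intro h _ hh2
      have hk1 : k + 1 ≤ h := by
        by_contra hc
        exact hh2 (mem_range.2 (by omega))
      have : stirling1 n (h + (n-k)) = 0 := stirling1_eq_zero (by omega)
      rw [this]
      push_cast
      ring)]
    apply Finset.sum_congr rfl
    intro h hh
    have hhk : h ≤ k := by have := mem_range.1 hh; omega
    -- Stirling value
    have hT := hTval (k-h) (n - (k-h))
    rw [show (n-(k-h)) + (k-h) = n from by omega,
        show n - (k-h) = h + (n-k) from by omega] at hT
    have harg : (n:ℚ) - ((k:ℚ) - h) = ((h + (n-k) : ℕ) : ℚ) := by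
      push_cast [Nat.cast_sub hn]
      ring
    rw [harg, hT, intChoose]
    have hprod : (∏ i ∈ range h, (((((n - k : ℕ) : ℤ) + (h : ℤ) - 1 : ℤ) : ℚ) - (i : ℚ)))
        = ∏ i ∈ range h, ((n:ℚ) - ((k:ℚ) - h + 1 + i)) := by
      apply Finset.prod_congr rfl
      intro i _
      push_cast [Nat.cast_sub hn]
      ring
    rw [hprod]
    ring
  · -- roots
    intro hk u hu1 huk
    rw [hPeval]
    rcases eq_or_lt_of_le hu1 with h1 | h1
    · -- u = -1
      rw [show ((u : ℤ) : ℚ) = -1 from by rw [← h1]; norm_num]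
      have e : ∀ h ∈ range (k+1),
          _root_.bernoulli h * (1/(h.factorial : ℚ)) * (∏ i ∈ range h, ((-1:ℚ) - ((k:ℚ) - h + 1 + i))) *
            (T (k-h)).eval ((-1:ℚ) - ((k:ℚ) - h)) * (-1:ℚ)^h
          = ((k+1).choose h : ℚ) * _root_.bernoulli h := by
        intro h hh
        have hhk : h ≤ k := by have := mem_range.1 hh; omega
        have hT : (T (k-h)).eval ((-1:ℚ) - ((k:ℚ) - h)) = 1 := by
          have := hTneg (k-h)
          rwa [show -(((k-h : ℕ)):ℚ) - 1 = (-1:ℚ) - ((k:ℚ) - h) from by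
            push_cast [Nat.cast_sub hhk]; ring] at this
        rw [hT, prod_at_neg_one k h hhk]
        have hdf : (((k+1).descFactorial h : ℕ) : ℚ)
            = (h.factorial : ℚ) * ((k+1).choose h : ℚ) := by
          rw [Nat.descFactorial_eq_factorial_mul_choose]
          push_cast
          ring
        rw [hdf]
        have hfac : (h.factorial : ℚ) ≠ 0 := Nat.cast_ne_zero.2 h.factorial_ne_zero
        field_simp
        rcases Nat.even_or_odd h with he | ho
        · rw [he.neg_one_pow]; ring
        · rw [ho.neg_one_pow]; ring
      rw [Finset.sum_congr rfl e, _root_.sum_bernoulli]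
      simp [Nat.succ_ne_zero, show k + 1 ≠ 1 by omega, show k ≠ 0 by omega]
    · -- 0 ≤ u
      have hu0 : 0 ≤ u := by omega
      set m := u.toNat with hm
      have hum : u = (m : ℤ) := (Int.toNat_of_nonneg hu0).symm
      have hmk : m ≤ k := by omega
      have hcast : ((u : ℤ) : ℚ) = (m : ℚ) := by rw [hum]; push_cast; ring
      rw [hcast]
      apply Finset.sum_eq_zero
      intro h hh
      have hhk : h ≤ k := by have := mem_range.1 hh; omega
      by_cases hcase : k - h < m
      · -- zero factor in the product
        have hh1 : 1 ≤ h := by omega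
        have hi : m - (k-h) - 1 ∈ range h := mem_range.2 (by omega)
        have hfac0 : (m:ℚ) - ((k:ℚ) - h + 1 + ((m - (k-h) - 1 : ℕ) : ℚ)) = 0 := by
          push_cast [Nat.cast_sub (show 1 ≤ m - (k-h) by omega),
            Nat.cast_sub (show k-h ≤ m by omega), Nat.cast_sub hhk]
          ring
        rw [Finset.prod_eq_zero hi hfac0]
        ring
      · -- m ≤ k - h
        push_neg at hcase
        by_cases hm0 : m = 0 ∧ 0 < h
        · obtain ⟨hm0', hh0⟩ := hm0
          have hz : ((m:ℚ)) ^ h = 0 := by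
            rw [hm0']; simp [zero_pow (show h ≠ 0 by omega)]
          rw [hz, mul_zero]
        · have hkh : 0 < k - h := by
            rcases Nat.eq_zero_or_pos m with h0 | h0
            · have : h = 0 := by
                by_contra hc
                exact hm0 ⟨h0, by omega⟩
              omega
            · omega
          have harg : (m:ℚ) - ((k:ℚ) - h) = -((((k-h) - m : ℕ)) : ℚ) := by
            push_cast [Nat.cast_sub hcase, Nat.cast_sub hhk]
            ring
          rw [harg, hTroot (k-h) ((k-h) - m) hkh (by omega)]
          ring
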